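/- arXiv:1103.0570 — 2 statements merged into one kernel-verified Lean document; each statement's English description precedes it below -/
import Mathlib

section
/- Let M : ℤ^ν → ℤ^ν be a symmetric integer matrix such that the kernel of M is generated by a single vector with all entries positive (e.g. the intersection matrix of a connected special fiber). Then the pairing ⟨,⟩_M : Φ_M × Φ_M → ℚ/ℤ on the torsion part Φ_M of coker(M) is perfect, i.e., the induced map Φ_M → Hom(Φ_M, ℚ/ℤ) is an isomorphism. -/
open Matrix

/-- The group `ℚ/ℤ`. -/
abbrev QZ : Type := ℚ ⧸ AddSubgroup.zmultiples (1 : ℚ)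

/-- The cokernel of `M : ℤ^ν → ℤ^ν`. -/
abbrev MatCoker {ν : ℕ} (M : Matrix (Fin ν) (Fin ν) ℤ) : Type :=
  (Fin ν → ℤ) ⧸ LinearMap.range M.mulVecLin

/-- `Φ_M`, the torsion subgroup of the cokernel of `M : ℤ^ν → ℤ^ν`. -/
abbrev PhiM {ν : ℕ} (M : Matrix (Fin ν) (Fin ν) ℤ) : Type :=
  Submodule.torsion ℤ (MatCoker M)


/-! ### Auxiliary lemmas -/

section Aux
variable {ν : ℕ} {M : Matrix (Fin ν) (Fin ν) ℤ} {v : Fin ν → ℤ}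

def castVec (X : Fin ν → ℤ) : Fin ν → ℚ := fun i => (X i : ℚ)

lemma castVec_dot (X Y : Fin ν → ℤ) : castVec X ⬝ᵥ castVec Y = ((X ⬝ᵥ Y : ℤ) : ℚ) := by
  simp [castVec, dotProduct]

lemma castVec_inj : Function.Injective (castVec (ν := ν)) := by
  intro X Y h
  funext i
  have := congrFun h i
  simpa [castVec] using this

lemma Mq_mulVec_cast (M : Matrix (Fin ν) (Fin ν) ℤ) (X : Fin ν → ℤ) :
    (M.map (Int.cast : ℤ → ℚ)) *ᵥ castVec X = castVec (M *ᵥ X) := by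
  funext i
  simp [castVec, Matrix.mulVec, dotProduct]

lemma castVec_smul (m : ℤ) (X : Fin ν → ℤ) : castVec (m • X) = (m : ℚ) • castVec X := by
  funext i; simp only [castVec, Pi.smul_apply, smul_eq_mul]; push_cast; ring

lemma clear_denoms (x : Fin ν → ℚ) : ∃ (m : ℤ) (X : Fin ν → ℤ), m ≠ 0 ∧ castVec X = (m : ℚ) • x := by
  refine ⟨∏ i, ((x i).den : ℤ), fun i => (x i).num * ((∏ j, ((x j).den : ℤ)) / ((x i).den : ℤ)), ?_, ?_⟩
  · positivity
  · funext i
    have hdvd : ((x i).den : ℤ) ∣ ∏ j, ((x j).den : ℤ) := Finset.dvd_prod_of_mem _ (Finset.mem_univ i)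
    have h1 : (x i).num * ((∏ j, ((x j).den : ℤ)) / ((x i).den : ℤ)) * ((x i).den : ℤ)
        = (x i).num * (∏ j, ((x j).den : ℤ)) := by
      rw [mul_assoc, Int.ediv_mul_cancel hdvd]
    have hden : ((x i).den : ℚ) ≠ 0 := by positivity
    have hx : x i * ((x i).den : ℚ) = ((x i).num : ℚ) := Rat.mul_den_eq_num (x i)
    have h3 := congrArg (fun z : ℤ => (z : ℚ)) (Int.ediv_mul_cancel hdvd)
    simp only [castVec, Pi.smul_apply, smul_eq_mul]
    push_cast at h3 ⊢
    linear_combination x i * h3 - (((∏ j, ((x j).den : ℤ)) / ((x i).den : ℤ) : ℤ) : ℚ) * hx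

lemma castVec_apply (X : Fin ν → ℤ) (i : Fin ν) : castVec X i = (X i : ℚ) := rfl

lemma castVec_zero : castVec (0 : Fin ν → ℤ) = 0 := by
  funext i; simp [castVec]

lemma dot_swap (hM : M.IsSymm) (S S' : Fin ν → ℤ) :
    S ⬝ᵥ M *ᵥ S' = S' ⬝ᵥ M *ᵥ S := by
  rw [Matrix.dotProduct_mulVec, ← Matrix.mulVec_transpose, hM.eq, dotProduct_comm]

lemma hMv (hker : LinearMap.ker M.mulVecLin = Submodule.span ℤ {v}) : M *ᵥ v = 0 := by
  have : v ∈ LinearMap.ker M.mulVecLin := by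
    rw [hker]; exact Submodule.mem_span_singleton_self v
  simpa [Matrix.mulVecLin_apply] using this

lemma ker_eq (hker : LinearMap.ker M.mulVecLin = Submodule.span ℤ {v})
    {X : Fin ν → ℤ} (hX : M *ᵥ X = 0) : ∃ c : ℤ, X = c • v := by
  have : X ∈ LinearMap.ker M.mulVecLin := by
    simpa [Matrix.mulVecLin_apply] using hX
  rw [hker, Submodule.mem_span_singleton] at this
  obtain ⟨c, hc⟩ := this
  exact ⟨c, hc.symm⟩

lemma key_int (hM : M.IsSymm) (hker : LinearMap.ker M.mulVecLin = Submodule.span ℤ {v})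
    {T T₁ T' S S₁ S' U : Fin ν → ℤ} {n n₁ n' : ℤ}
    (h : M *ᵥ S = n • T) (h₁ : M *ᵥ S₁ = n₁ • T₁) (h' : M *ᵥ S' = n' • T')
    (hU : T₁ = T + M *ᵥ U) :
    n₁ * (S ⬝ᵥ M *ᵥ S') - n * (S₁ ⬝ᵥ M *ᵥ S') = -(n * n₁ * n') * (U ⬝ᵥ T') := by
  have h0 : M *ᵥ (n₁ • S - n • S₁ + (n * n₁) • U) = 0 := by
    rw [Matrix.mulVec_add, Matrix.mulVec_sub, Matrix.mulVec_smul, Matrix.mulVec_smul,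
      Matrix.mulVec_smul, h, h₁, hU]
    funext i
    simp only [Pi.add_apply, Pi.sub_apply, Pi.smul_apply, Pi.zero_apply, smul_eq_mul,
      Matrix.mulVec, Pi.add_apply]
    ring
  obtain ⟨c, hc⟩ := ker_eq hker h0
  have hv0 : v ⬝ᵥ M *ᵥ S' = 0 := by
    rw [dot_swap hM, hMv hker, dotProduct_zero]
  have hdot := congrArg (fun X => X ⬝ᵥ M *ᵥ S') hc
  simp only [add_dotProduct, sub_dotProduct, smul_dotProduct,
    smul_eq_mul, hv0, mul_zero] at hdot
  have hU' : U ⬝ᵥ M *ᵥ S' = n' * (U ⬝ᵥ T') := by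
    rw [h', dotProduct_smul, smul_eq_mul]
  rw [hU'] at hdot
  linarith

abbrev qzmk (q : ℚ) : QZ := QuotientAddGroup.mk q
lemma qzmk_eq_of_sub_int {a b : ℚ} (k : ℤ) (h : a - b = k) : qzmk a = qzmk b := by
  rw [QuotientAddGroup.eq_iff_sub_mem]  -- may not exist; fallback below
  exact ⟨k, by simp [h]⟩

lemma qzmk_int_eq_zero (k : ℤ) : qzmk (k : ℚ) = 0 := by
  rw [QuotientAddGroup.eq_zero_iff]
  exact ⟨k, by simp⟩

lemma qzmk_add (a b : ℚ) : qzmk (a + b) = qzmk a + qzmk b := rfl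

lemma exists_data (x : PhiM M) :
    ∃ (T S : Fin ν → ℤ) (n : ℤ), n ≠ 0 ∧ (x : MatCoker M) = Submodule.Quotient.mk T ∧
      M *ᵥ S = n • T := by
  obtain ⟨T, hT⟩ := Submodule.Quotient.mk_surjective _ (x : MatCoker M)
  obtain ⟨a, ha⟩ := (Submodule.mem_torsion_iff _).1 x.2
  have h0 : Submodule.Quotient.mk (p := LinearMap.range M.mulVecLin) ((a : ℤ) • T) = 0 := by
    rw [Submodule.Quotient.mk_smul, hT, ← Submonoid.smul_def, ha]
  rw [Submodule.Quotient.mk_eq_zero] at h0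
  obtain ⟨S, hS⟩ := h0
  exact ⟨T, S, a, nonZeroDivisors.coe_ne_zero a, hT.symm, by simpa [Matrix.mulVecLin_apply] using hS⟩
def pval (M : Matrix (Fin ν) (Fin ν) ℤ) (S S' : Fin ν → ℤ) (n n' : ℤ) : ℚ :=
  ((S ⬝ᵥ M *ᵥ S' : ℤ) : ℚ) / ((n : ℚ) * (n' : ℚ))

lemma key_rat (hM : M.IsSymm) (hker : LinearMap.ker M.mulVecLin = Submodule.span ℤ {v})
    {T T₁ T' S S₁ S' U : Fin ν → ℤ} {n n₁ n' : ℤ}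
    (hn : n ≠ 0) (hn₁ : n₁ ≠ 0) (hn' : n' ≠ 0)
    (h : M *ᵥ S = n • T) (h₁ : M *ᵥ S₁ = n₁ • T₁) (h' : M *ᵥ S' = n' • T')
    (hU : T₁ = T + M *ᵥ U) :
    qzmk (pval M S S' n n') = qzmk (pval M S₁ S' n₁ n') := by
  apply qzmk_eq_of_sub_int (-(U ⬝ᵥ T'))
  have hid := key_int hM hker h h₁ h' hU
  have hcast := congrArg (fun z : ℤ => (z : ℚ)) hid
  push_cast at hcast
  have hnq : (n : ℚ) ≠ 0 := Int.cast_ne_zero.2 hn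
  have hn₁q : (n₁ : ℚ) ≠ 0 := Int.cast_ne_zero.2 hn₁
  have hn'q : (n' : ℚ) ≠ 0 := Int.cast_ne_zero.2 hn'
  unfold pval
  field_simp
  push_cast
  linear_combination hcast

lemma welldef (hM : M.IsSymm) (hker : LinearMap.ker M.mulVecLin = Submodule.span ℤ {v})
    {T T₁ T' T₁' S S₁ S' S₁' : Fin ν → ℤ} {n n₁ n' n₁' : ℤ}
    (hn : n ≠ 0) (hn₁ : n₁ ≠ 0) (hn' : n' ≠ 0) (hn₁' : n₁' ≠ 0)
    (hTT : T₁ - T ∈ LinearMap.range M.mulVecLin)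
    (hTT' : T₁' - T' ∈ LinearMap.range M.mulVecLin)
    (h : M *ᵥ S = n • T) (h₁ : M *ᵥ S₁ = n₁ • T₁)
    (h' : M *ᵥ S' = n' • T') (h₁' : M *ᵥ S₁' = n₁' • T₁') :
    qzmk (pval M S S' n n') = qzmk (pval M S₁ S₁' n₁ n₁') := by
  obtain ⟨U, hU⟩ := hTT
  obtain ⟨U', hU'⟩ := hTT'
  have hU2 : T₁ = T + M *ᵥ U := by
    rw [Matrix.mulVecLin_apply] at hU; rw [hU]; abel
  have hU2' : T₁' = T' + M *ᵥ U' := by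
    rw [Matrix.mulVecLin_apply] at hU'; rw [hU']; abel
  have step1 : qzmk (pval M S S' n n') = qzmk (pval M S₁ S' n₁ n') :=
    key_rat hM hker hn hn₁ hn' h h₁ h' hU2
  have swap1 : pval M S₁ S' n₁ n' = pval M S' S₁ n' n₁ := by
    unfold pval; rw [dot_swap hM, mul_comm]
  have swap2 : pval M S₁' S₁ n₁' n₁ = pval M S₁ S₁' n₁ n₁' := by
    unfold pval; rw [dot_swap hM, mul_comm]
  have step2 : qzmk (pval M S' S₁ n' n₁) = qzmk (pval M S₁' S₁ n₁' n₁) :=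
    key_rat hM hker hn' hn₁' hn₁ h' h₁' h₁ hU2'
  rw [step1, swap1, step2, swap2]
lemma Mq_isSymm (hM : M.IsSymm) : (M.map (Int.cast : ℤ → ℚ)).IsSymm := by
  unfold Matrix.IsSymm
  rw [← Matrix.transpose_map, hM.eq]

lemma dot_swap_q {A : Matrix (Fin ν) (Fin ν) ℚ} (hA : A.IsSymm) (x y : Fin ν → ℚ) :
    x ⬝ᵥ A *ᵥ y = y ⬝ᵥ A *ᵥ x := by
  rw [Matrix.dotProduct_mulVec, ← Matrix.mulVec_transpose, hA.eq, dotProduct_comm]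

/-- the dot-with-`vq` functional -/
noncomputable def phiv (v : Fin ν → ℤ) : (Fin ν → ℚ) →ₗ[ℚ] ℚ where
  toFun x := castVec v ⬝ᵥ x
  map_add' x y := dotProduct_add _ x y
  map_smul' c x := by simp [dotProduct_smul]

lemma Mq_mulVec_vq (hker : LinearMap.ker M.mulVecLin = Submodule.span ℤ {v}) :
    (M.map (Int.cast : ℤ → ℚ)) *ᵥ castVec v = 0 := by
  rw [Mq_mulVec_cast, hMv hker, castVec_zero]

lemma kerq_eq (hker : LinearMap.ker M.mulVecLin = Submodule.span ℤ {v}) :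
    LinearMap.ker (M.map (Int.cast : ℤ → ℚ)).mulVecLin = Submodule.span ℚ {castVec v} := by
  apply le_antisymm
  · intro x hx
    rw [LinearMap.mem_ker, Matrix.mulVecLin_apply] at hx
    obtain ⟨m, X, hm, hX⟩ := clear_denoms x
    have h1 : M *ᵥ X = 0 := by
      apply castVec_inj
      rw [← Mq_mulVec_cast, hX, Matrix.mulVec_smul, hx, castVec_zero]
      simp
    obtain ⟨c, hc⟩ := ker_eq hker h1
    have : (m : ℚ) • x = (c : ℚ) • castVec v := by
      rw [← hX, hc, castVec_smul]
    rw [Submodule.mem_span_singleton]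
    refine ⟨(c : ℚ) / (m : ℚ), ?_⟩
    have hmq : (m : ℚ) ≠ 0 := Int.cast_ne_zero.2 hm
    have h2 := congrArg (fun y => (m : ℚ)⁻¹ • y) this
    simp only [smul_smul, inv_mul_cancel₀ hmq, one_smul] at h2
    rw [h2, div_eq_inv_mul]
  · rw [Submodule.span_le, Set.singleton_subset_iff]
    rw [SetLike.mem_coe, LinearMap.mem_ker, Matrix.mulVecLin_apply]
    exact Mq_mulVec_vq hker



lemma torsion_lift (hM : M.IsSymm) (hv : ∀ i, 0 < v i)
    (hker : LinearMap.ker M.mulVecLin = Submodule.span ℤ {v}) {Y : Fin ν → ℤ} (hY : v ⬝ᵥ Y = 0) :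
    ∃ (m : ℤ) (S : Fin ν → ℤ), m ≠ 0 ∧ M *ᵥ S = m • Y := by
  rcases Nat.eq_zero_or_pos ν with h0 | hpos
  · have hempty : IsEmpty (Fin ν) := by rw [h0]; infer_instance
    have hY0 : Y = 0 := funext fun i => (hempty.false i).elim
    exact ⟨1, 0, one_ne_zero, by rw [hY0]; simp⟩
  · set Q := M.map (Int.cast : ℤ → ℚ) with hQ
    have hQsymm : Q.IsSymm := Mq_isSymm hM
    have hQv : Q *ᵥ castVec v = 0 := Mq_mulVec_vq hker
    have hrange_le : LinearMap.range Q.mulVecLin ≤ LinearMap.ker (phiv v) := by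
      rintro _ ⟨s, rfl⟩
      rw [LinearMap.mem_ker]
      show castVec v ⬝ᵥ Q *ᵥ s = 0
      rw [dot_swap_q hQsymm, hQv, dotProduct_zero]
    have i0 : Fin ν := ⟨0, hpos⟩
    have hvq_ne : castVec v ≠ 0 := by
      intro h
      have := congrFun h i0
      rw [castVec_apply] at this
      simp only [Pi.zero_apply, Int.cast_eq_zero] at this
      exact (hv i0).ne' this
    have hker_fr : Module.finrank ℚ (LinearMap.ker Q.mulVecLin) = 1 := by
      rw [kerq_eq hker]
      exact finrank_span_singleton hvq_ne
    have hrn := LinearMap.finrank_range_add_finrank_ker Q.mulVecLin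
    rw [Module.finrank_fintype_fun_eq_card, Fintype.card_fin, hker_fr] at hrn
    have hvv : (0 : ℤ) < v ⬝ᵥ v := by
      unfold dotProduct
      exact Finset.sum_pos (fun i _ => mul_pos (hv i) (hv i)) ⟨i0, Finset.mem_univ i0⟩
    have hphi_ne : phiv v (castVec v) ≠ 0 := by
      show castVec v ⬝ᵥ castVec v ≠ 0
      rw [castVec_dot]
      exact_mod_cast hvv.ne'
    have hsurj : Function.Surjective (phiv v) := by
      intro q
      refine ⟨(q / phiv v (castVec v)) • castVec v, ?_⟩
      rw [_root_.map_smul, smul_eq_mul, div_mul_cancel₀ _ hphi_ne]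
    have hrange_phi : LinearMap.range (phiv v) = ⊤ := LinearMap.range_eq_top.2 hsurj
    have hrn2 := LinearMap.finrank_range_add_finrank_ker (phiv v)
    rw [Module.finrank_fintype_fun_eq_card, Fintype.card_fin, hrange_phi] at hrn2
    rw [finrank_top, Module.finrank_self] at hrn2
    have heq : LinearMap.range Q.mulVecLin = LinearMap.ker (phiv v) :=
      Submodule.eq_of_le_of_finrank_eq hrange_le (by omega)
    have hYmem : castVec Y ∈ LinearMap.ker (phiv v) := by
      rw [LinearMap.mem_ker]
      show castVec v ⬝ᵥ castVec Y = 0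
      rw [castVec_dot, hY]; simp
    rw [← heq] at hYmem
    obtain ⟨s, hs⟩ := hYmem
    rw [Matrix.mulVecLin_apply] at hs
    obtain ⟨m, Su, hm, hSu⟩ := clear_denoms s
    refine ⟨m, Su, hm, castVec_inj ?_⟩
    rw [← Mq_mulVec_cast, hSu, Matrix.mulVec_smul, hs, castVec_smul]
/-- the dot-with-`v` functional over ℤ -/
def phivZ (v : Fin ν → ℤ) : (Fin ν → ℤ) →ₗ[ℤ] ℤ where
  toFun x := v ⬝ᵥ x
  map_add' x y := dotProduct_add _ x y
  map_smul' c x := by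
    show v ⬝ᵥ (c • x) = c * (v ⬝ᵥ x)
    rw [dotProduct_smul, smul_eq_mul]

lemma inj_core (hM : M.IsSymm) (hv : ∀ i, 0 < v i)
    (hker : LinearMap.ker M.mulVecLin = Submodule.span ℤ {v})
    {T S : Fin ν → ℤ} {n : ℤ} (hn : n ≠ 0) (hMS : M *ᵥ S = n • T)
    (hdvd : ∀ Y : Fin ν → ℤ, v ⬝ᵥ Y = 0 → n ∣ S ⬝ᵥ Y) :
    T ∈ LinearMap.range M.mulVecLin := by
  rcases Nat.eq_zero_or_pos ν with h0 | hpos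
  · have hempty : IsEmpty (Fin ν) := by rw [h0]; infer_instance
    have hT0 : T = 0 := funext fun i => (hempty.false i).elim
    rw [hT0]
    exact Submodule.zero_mem _
  · set ℓ := phivZ v with hℓ
    haveI hpr : (LinearMap.range ℓ).IsPrincipal :=
      IsPrincipalIdealRing.principal (LinearMap.range ℓ : Ideal ℤ)
    set d := Submodule.IsPrincipal.generator (LinearMap.range ℓ) with hd
    obtain ⟨w, hw⟩ := Submodule.IsPrincipal.generator_mem (LinearMap.range ℓ)
    have hspan := Submodule.IsPrincipal.span_singleton_generator (LinearMap.range ℓ)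
    have hdvd_v : ∀ i, d ∣ v i := by
      intro i
      have hmem : v i ∈ LinearMap.range ℓ := by
        refine ⟨Pi.single i 1, ?_⟩
        show v ⬝ᵥ Pi.single i 1 = v i
        simp [dotProduct_single]
      rw [← hspan, Submodule.mem_span_singleton] at hmem
      obtain ⟨a, ha⟩ := hmem
      refine ⟨a, ?_⟩
      rw [← ha]
      show a • d = d * a
      rw [smul_eq_mul, mul_comm]
    set i0 : Fin ν := ⟨0, hpos⟩
    have hd0 : d ≠ 0 := by
      intro h
      obtain ⟨a, ha⟩ := hdvd_v i0
      rw [h, zero_mul] at ha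
      exact (hv i0).ne' ha
    set c : Fin ν → ℤ := fun i => v i / d with hc
    have hcd : ∀ i, v i = c i * d := fun i => (Int.ediv_mul_cancel (hdvd_v i)).symm
    -- test vectors
    set m := S ⬝ᵥ w with hm
    have hSY : ∀ i, n ∣ S i - c i * m := by
      intro i
      have hY : v ⬝ᵥ (Pi.single i 1 - c i • w) = 0 := by
        rw [dotProduct_sub, dotProduct_smul]
        have h1 : v ⬝ᵥ Pi.single i 1 = v i := by simp [dotProduct_single]
        have h2 : v ⬝ᵥ w = d := hw
        rw [h1, h2, smul_eq_mul, hcd i]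
        ring
      have := hdvd _ hY
      rwa [dotProduct_sub, dotProduct_smul, smul_eq_mul,
        dotProduct_single, mul_one] at this
    set U : Fin ν → ℤ := fun i => (S i - c i * m) / n with hU
    have hS_eq : S = m • c + n • U := by
      funext i
      have := Int.mul_ediv_cancel' (hSY i)
      simp only [Pi.add_apply, Pi.smul_apply, smul_eq_mul, hU]
      rw [mul_comm m (c i)]
      omega
    have hMc : M *ᵥ c = 0 := by
      have hvc : d • c = v := by
        funext i
        rw [Pi.smul_apply, smul_eq_mul, mul_comm, ← hcd i]
      have : M *ᵥ (d • c) = 0 := by rw [hvc, hMv hker]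
      rw [Matrix.mulVec_smul] at this
      funext i
      have := congrFun this i
      simp only [Pi.smul_apply, smul_eq_mul, Pi.zero_apply] at this
      exact (mul_eq_zero.1 this).resolve_left hd0
    have hnT : n • T = n • (M *ᵥ U) := by
      rw [← hMS, hS_eq, Matrix.mulVec_add, Matrix.mulVec_smul, Matrix.mulVec_smul, hMc]
      funext i
      simp
    refine ⟨U, ?_⟩
    rw [Matrix.mulVecLin_apply]
    funext i
    have := congrFun hnT i
    simp only [Pi.smul_apply, smul_eq_mul] at this
    exact (mul_left_cancel₀ hn this).symm

/-! ### the pairing -/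

noncomputable def pdataT (x : PhiM M) : Fin ν → ℤ := (exists_data x).choose
noncomputable def pdataS (x : PhiM M) : Fin ν → ℤ := (exists_data x).choose_spec.choose
noncomputable def pdataN (x : PhiM M) : ℤ := (exists_data x).choose_spec.choose_spec.choose

lemma pdata_spec (x : PhiM M) : pdataN x ≠ 0 ∧
    (x : MatCoker M) = Submodule.Quotient.mk (pdataT x) ∧
    M *ᵥ pdataS x = pdataN x • pdataT x :=
  (exists_data x).choose_spec.choose_spec.choose_spec

noncomputable def pairFun (M : Matrix (Fin ν) (Fin ν) ℤ) (x y : PhiM M) : QZ :=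
  qzmk (pval M (pdataS x) (pdataS y) (pdataN x) (pdataN y))

section withHyps
variable (hM : M.IsSymm) (hv : ∀ i, 0 < v i)
  (hker : LinearMap.ker M.mulVecLin = Submodule.span ℤ {v})

include hM hker

lemma pairFun_spec {x y : PhiM M} {T T' S S' : Fin ν → ℤ} {n n' : ℤ}
    (hx : (x : MatCoker M) = Submodule.Quotient.mk T)
    (hy : (y : MatCoker M) = Submodule.Quotient.mk T')
    (hn : n ≠ 0) (hn' : n' ≠ 0)
    (hS : M *ᵥ S = n • T) (hS' : M *ᵥ S' = n' • T') :
    pairFun M x y = qzmk (pval M S S' n n') := by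
  obtain ⟨hnx, hTx, hSx⟩ := pdata_spec x
  obtain ⟨hny, hTy, hSy⟩ := pdata_spec y
  have hTT : T - pdataT x ∈ LinearMap.range M.mulVecLin := by
    rw [← Submodule.Quotient.eq]
    rw [hx] at hTx; exact hTx
  have hTT' : T' - pdataT y ∈ LinearMap.range M.mulVecLin := by
    rw [← Submodule.Quotient.eq]
    rw [hy] at hTy; exact hTy
  exact welldef hM hker hnx hn hny hn' hTT hTT' hSx hS hSy hS'

lemma pairFun_add_left (x y z : PhiM M) :
    pairFun M (x + y) z = pairFun M x z + pairFun M y z := by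
  obtain ⟨hnx, hTx, hSx⟩ := pdata_spec x
  obtain ⟨hny, hTy, hSy⟩ := pdata_spec y
  obtain ⟨hnz, hTz, hSz⟩ := pdata_spec z
  have hxy : ((x + y : PhiM M) : MatCoker M)
      = Submodule.Quotient.mk (pdataT x + pdataT y) := by
    rw [Submodule.coe_add, hTx, hTy, ← Submodule.Quotient.mk_add]
  have hS : M *ᵥ (pdataN y • pdataS x + pdataN x • pdataS y)
      = (pdataN x * pdataN y) • (pdataT x + pdataT y) := by
    rw [Matrix.mulVec_add, Matrix.mulVec_smul, Matrix.mulVec_smul, hSx, hSy]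
    funext i
    simp only [Pi.add_apply, Pi.smul_apply, smul_eq_mul]
    ring
  have h1 : pairFun M (x + y) z = qzmk (pval M (pdataN y • pdataS x + pdataN x • pdataS y)
      (pdataS z) (pdataN x * pdataN y) (pdataN z)) :=
    pairFun_spec hM hker hxy hTz (mul_ne_zero hnx hny) hnz hS hSz
  rw [h1]
  show _ = qzmk _ + qzmk _
  rw [← QuotientAddGroup.mk_add]
  congr 1
  unfold pval
  have hAdd : (pdataN y • pdataS x + pdataN x • pdataS y) ⬝ᵥ M *ᵥ pdataS z
      = pdataN y * (pdataS x ⬝ᵥ M *ᵥ pdataS z) + pdataN x * (pdataS y ⬝ᵥ M *ᵥ pdataS z) := by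
    rw [add_dotProduct, smul_dotProduct, smul_dotProduct,
      smul_eq_mul, smul_eq_mul]
  rw [hAdd]
  have c1 : (pdataN x : ℚ) ≠ 0 := Int.cast_ne_zero.2 hnx
  have c2 : (pdataN y : ℚ) ≠ 0 := Int.cast_ne_zero.2 hny
  have c3 : (pdataN z : ℚ) ≠ 0 := Int.cast_ne_zero.2 hnz
  push_cast
  field_simp

lemma pairFun_symm (x y : PhiM M) : pairFun M x y = pairFun M y x := by
  unfold pairFun pval
  rw [dot_swap hM, mul_comm]

end withHyps

section withHyps2
variable (hM : M.IsSymm) (hv : ∀ i, 0 < v i)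
  (hker : LinearMap.ker M.mulVecLin = Submodule.span ℤ {v})

lemma memN_torsion (hM : M.IsSymm) (hv : ∀ i, 0 < v i)
    (hker : LinearMap.ker M.mulVecLin = Submodule.span ℤ {v}) {Y : Fin ν → ℤ}
    (hY : v ⬝ᵥ Y = 0) :
    (Submodule.Quotient.mk Y : MatCoker M) ∈ Submodule.torsion ℤ (MatCoker M) := by
  obtain ⟨m, S, hm, hMS⟩ := torsion_lift hM hv hker hY
  refine ⟨⟨m, mem_nonZeroDivisors_of_ne_zero hm⟩, ?_⟩
  rw [Submonoid.smul_def]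
  show m • (Submodule.Quotient.mk Y : MatCoker M) = 0
  rw [← Submodule.Quotient.mk_smul, Submodule.Quotient.mk_eq_zero]
  exact ⟨S, by rw [Matrix.mulVecLin_apply, hMS]⟩

lemma dot_v_mulVec (hM : M.IsSymm) (hker : LinearMap.ker M.mulVecLin = Submodule.span ℤ {v})
    (S : Fin ν → ℤ) : v ⬝ᵥ M *ᵥ S = 0 := by
  rw [dot_swap hM]
  have hMv0 : M *ᵥ v = 0 := by
    have : v ∈ LinearMap.ker M.mulVecLin := by
      rw [hker]; exact Submodule.mem_span_singleton_self v
    simpa [Matrix.mulVecLin_apply] using this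
  rw [hMv0, dotProduct_zero]

lemma dot_v_of_torsion (hM : M.IsSymm) (hker : LinearMap.ker M.mulVecLin = Submodule.span ℤ {v})
    {T S : Fin ν → ℤ} {n : ℤ} (hn : n ≠ 0) (hMS : M *ᵥ S = n • T) : v ⬝ᵥ T = 0 := by
  have h0 : v ⬝ᵥ M *ᵥ S = 0 := dot_v_mulVec hM hker S
  rw [hMS, dotProduct_smul, smul_eq_mul] at h0
  exact (mul_eq_zero.1 h0).resolve_left hn

/-- the map `N → Φ_M` -/
noncomputable def toPhi (hM : M.IsSymm) (hv : ∀ i, 0 < v i)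
    (hker : LinearMap.ker M.mulVecLin = Submodule.span ℤ {v}) :
    (LinearMap.ker (phivZ v)) →+ PhiM M where
  toFun Y := ⟨Submodule.Quotient.mk Y.1, memN_torsion hM hv hker (Y.2 : v ⬝ᵥ Y.1 = 0)⟩
  map_zero' := by
    apply Subtype.ext
    show (Submodule.Quotient.mk (0 : Fin ν → ℤ) : MatCoker M) = 0
    simp
  map_add' a b := by
    apply Subtype.ext
    show (Submodule.Quotient.mk (a.1 + b.1) : MatCoker M) = _
    rw [Submodule.Quotient.mk_add]
    rfl

lemma qzmk_eq_zero_iff (q : ℚ) : qzmk q = 0 ↔ ∃ k : ℤ, q = k := by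
  rw [QuotientAddGroup.eq_zero_iff]
  constructor
  · rintro ⟨k, hk⟩
    exact ⟨k, by simpa using hk.symm⟩
  · rintro ⟨k, hk⟩
    exact ⟨k, by simp [hk]⟩

include hM hv hker in
lemma beta_inj {x : PhiM M} (hx : ∀ y : PhiM M, pairFun M x y = 0) : x = 0 := by
  obtain ⟨hnx, hTx, hSx⟩ := pdata_spec x
  have hdvd : ∀ Y : Fin ν → ℤ, v ⬝ᵥ Y = 0 → pdataN x ∣ pdataS x ⬝ᵥ Y := by
    intro Y hY
    obtain ⟨m, SY, hm, hMSY⟩ := torsion_lift hM hv hker hY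
    set y : PhiM M := ⟨Submodule.Quotient.mk Y, memN_torsion hM hv hker hY⟩ with hy
    have h1 : pairFun M x y = qzmk (pval M (pdataS x) SY (pdataN x) m) :=
      pairFun_spec hM hker hTx rfl hnx hm hSx hMSY
    rw [hx y] at h1
    obtain ⟨k, hk⟩ := (qzmk_eq_zero_iff _).1 h1.symm
    unfold pval at hk
    have hnum : pdataS x ⬝ᵥ M *ᵥ SY = m * (pdataS x ⬝ᵥ Y) := by
      rw [hMSY, dotProduct_smul, smul_eq_mul]
    rw [hnum] at hk
    have c1 : (pdataN x : ℚ) ≠ 0 := Int.cast_ne_zero.2 hnx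
    have c2 : (m : ℚ) ≠ 0 := Int.cast_ne_zero.2 hm
    have hq : ((pdataS x ⬝ᵥ Y : ℤ) : ℚ) = ((pdataN x * k : ℤ) : ℚ) := by
      field_simp at hk
      push_cast at hk ⊢
      have h2 := mul_left_cancel₀ c2 (hk.trans (by ring : (pdataN x : ℚ) * m * k = (m : ℚ) * ((pdataN x : ℚ) * k)))
      linarith [h2]
    exact ⟨k, Int.cast_injective hq⟩
  have hT := inj_core hM hv hker hnx hSx hdvd
  apply Subtype.ext
  show (x : MatCoker M) = 0
  rw [hTx, Submodule.Quotient.mk_eq_zero]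
  exact hT

include hM hv hker in
lemma beta_surj (χ : PhiM M →+ QZ) : ∃ x₀ : PhiM M, ∀ y, pairFun M x₀ y = χ y := by
  classical
  set N := LinearMap.ker (phivZ v) with hN
  have hBaer : Module.Baer ℤ QZ := Module.Baer.of_divisible _
  obtain ⟨h, hh⟩ := hBaer.extension_property_addMonoidHom
    (AddMonoidHom.mk' (fun Y : N => (Y : Fin ν → ℤ)) (fun a b => rfl))
    (fun a b hab => Subtype.ext hab)
    (χ.comp (toPhi hM hv hker))
  have hfact : ∀ Y : N, h (Y : Fin ν → ℤ) = χ (toPhi hM hv hker Y) := by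
    intro Y
    have := DFunLike.congr_fun hh Y
    exact this
  have hu : ∀ i, ∃ q : ℚ, qzmk q = h (Pi.single i 1) :=
    fun i => QuotientAddGroup.mk_surjective _
  set u : Fin ν → ℚ := fun i => (hu i).choose with hudef
  have huspec : ∀ i, qzmk (u i) = h (Pi.single i 1) := fun i => (hu i).choose_spec
  have heval : ∀ X : Fin ν → ℤ, qzmk (castVec X ⬝ᵥ u) = h X := by
    intro X
    have hdot : castVec X ⬝ᵥ u = ∑ i, (X i : ℚ) * u i := by
      unfold dotProduct
      exact Finset.sum_congr rfl fun i _ => by rw [castVec_apply]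
    have hXsum : ∑ i, Pi.single i (X i) = X := Finset.univ_sum_single X
    rw [hdot]
    have hmksum : qzmk (∑ i, (X i : ℚ) * u i) = ∑ i, qzmk ((X i : ℚ) * u i) :=
      map_sum (QuotientAddGroup.mk' _) _ _
    rw [hmksum]
    have hterm : ∀ i, qzmk ((X i : ℚ) * u i) = h (Pi.single i (X i)) := by
      intro i
      have h1 : ((X i : ℚ)) * u i = (X i) • u i := by rw [zsmul_eq_mul]
      have h2 : qzmk ((X i) • u i) = (X i) • qzmk (u i) :=
        map_zsmul (QuotientAddGroup.mk' _) _ _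
      rw [h1, h2, huspec i, ← map_zsmul h]
      congr 1
      rw [← Pi.single_smul, smul_eq_mul, mul_one]
    rw [Finset.sum_congr rfl fun i _ => hterm i, ← map_sum h, hXsum]
  have hmemN : ∀ S : Fin ν → ℤ, M *ᵥ S ∈ N := by
    intro S
    show phivZ v (M *ᵥ S) = 0
    exact dot_v_mulVec hM hker S
  have hzero : ∀ S : Fin ν → ℤ, h (M *ᵥ S) = 0 := by
    intro S
    have h1 : h (M *ᵥ S) = χ (toPhi hM hv hker ⟨M *ᵥ S, hmemN S⟩) := hfact ⟨M *ᵥ S, hmemN S⟩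
    rw [h1]
    have h2 : toPhi hM hv hker ⟨M *ᵥ S, hmemN S⟩ = 0 := by
      apply Subtype.ext
      show (Submodule.Quotient.mk (M *ᵥ S) : MatCoker M) = 0
      rw [Submodule.Quotient.mk_eq_zero]
      exact ⟨S, by rw [Matrix.mulVecLin_apply]⟩
    rw [h2, map_zero]
  have hTi : ∀ i, ∃ k : ℤ, (k : ℚ) = castVec (M *ᵥ Pi.single i 1) ⬝ᵥ u := by
    intro i
    have h0 := heval (M *ᵥ Pi.single i 1)
    rw [hzero] at h0
    obtain ⟨k, hk⟩ := (qzmk_eq_zero_iff _).1 h0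
    exact ⟨k, hk.symm⟩
  set T₀ : Fin ν → ℤ := fun i => (hTi i).choose with hT₀def
  have hT₀ : ∀ i, ((T₀ i : ℚ)) = castVec (M *ᵥ Pi.single i 1) ⬝ᵥ u :=
    fun i => (hTi i).choose_spec
  have hT₀q : castVec T₀ = (M.map (Int.cast : ℤ → ℚ)) *ᵥ u := by
    funext i
    rw [castVec_apply, hT₀ i]
    unfold dotProduct
    apply Finset.sum_congr rfl
    intro j _
    rw [castVec_apply]
    have hMji : (M *ᵥ Pi.single i 1) j = M j i := by
      show (fun k => M j k) ⬝ᵥ Pi.single i 1 = M j i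
      rw [dotProduct_single, mul_one]
    have hsym : M j i = M i j := by
      have h3 := congrFun (congrFun hM.eq j) i
      simpa [Matrix.transpose_apply] using h3.symm
    rw [hMji, hsym]
    simp [Matrix.map_apply]
  have hvT₀ : v ⬝ᵥ T₀ = 0 := by
    have hq : ((v ⬝ᵥ T₀ : ℤ) : ℚ) = 0 := by
      rw [← castVec_dot, hT₀q, dot_swap_q (Mq_isSymm hM), Mq_mulVec_vq hker,
        dotProduct_zero]
    exact_mod_cast hq
  refine ⟨⟨Submodule.Quotient.mk T₀, memN_torsion hM hv hker hvT₀⟩, ?_⟩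
  intro y
  obtain ⟨T', S', n', hn', hy, hS'⟩ := exists_data y
  have hvT' : v ⬝ᵥ T' = 0 := dot_v_of_torsion hM hker hn' hS'
  obtain ⟨m, Su, hm, hSu⟩ := clear_denoms u
  have hMSu : M *ᵥ Su = m • T₀ := by
    apply castVec_inj
    rw [← Mq_mulVec_cast, hSu, Matrix.mulVec_smul, ← hT₀q, castVec_smul]
  have hspec := pairFun_spec hM hker
    (rfl : ((⟨Submodule.Quotient.mk T₀, memN_torsion hM hv hker hvT₀⟩ : PhiM M) : MatCoker M)
      = Submodule.Quotient.mk T₀) hy hm hn' hMSu hS'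
  rw [hspec]
  have hcastS' : castVec (M *ᵥ S') = (n' : ℚ) • castVec T' := by
    rw [hS', castVec_smul]
  have hnum : ((Su ⬝ᵥ M *ᵥ S' : ℤ) : ℚ) = (m : ℚ) * ((n' : ℚ) * (castVec T' ⬝ᵥ u)) := by
    rw [← castVec_dot, hSu, hcastS', smul_dotProduct, dotProduct_smul,
      smul_eq_mul, smul_eq_mul]
    rw [dotProduct_comm]
  have hmq : (m : ℚ) ≠ 0 := Int.cast_ne_zero.2 hm
  have hn'q : (n' : ℚ) ≠ 0 := Int.cast_ne_zero.2 hn'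
  have hpv : pval M Su S' m n' = castVec T' ⬝ᵥ u := by
    unfold pval
    rw [hnum]
    field_simp
  rw [hpv, heval T']
  rw [hfact ⟨T', hvT'⟩]
  congr 1
  apply Subtype.ext
  show (Submodule.Quotient.mk T' : MatCoker M) = (y : MatCoker M)
  rw [hy]

end withHyps2
end Aux

/-- Bosch–Lorenzini, Theorem 1.3: let `M : ℤ^ν → ℤ^ν` be a
symmetric integer matrix whose kernel is generated by a single vector with all
entries positive (e.g. the intersection matrix of a connected special fiber).
Then the pairing `⟨,⟩_M : Φ_M × Φ_M → ℚ/ℤ`, `⟨T̄,T̄'⟩_M = (ᵗS/n)M(S'/n') mod ℤ`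
with `MS = nT`, `MS' = n'T'`, is perfect: the induced map
`Φ_M → Hom(Φ_M, ℚ/ℤ)` is an isomorphism. -/
theorem stmt6 (ν : ℕ) (M : Matrix (Fin ν) (Fin ν) ℤ) (hM : M.IsSymm)
    (v : Fin ν → ℤ) (hv : ∀ i, 0 < v i)
    (hker : LinearMap.ker M.mulVecLin = Submodule.span ℤ {v}) :
    ∃ β : PhiM M →+ PhiM M →+ QZ,
      (∀ (x y : PhiM M) (T T' : Fin ν → ℤ),
        (x : MatCoker M) = Submodule.Quotient.mk T →
        (y : MatCoker M) = Submodule.Quotient.mk T' →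
        ∀ (n n' : ℤ) (S S' : Fin ν → ℤ), n ≠ 0 → n' ≠ 0 →
          M.mulVec S = n • T → M.mulVec S' = n' • T' →
          β x y = QuotientAddGroup.mk
            (((S ⬝ᵥ M.mulVec S' : ℤ) : ℚ) / ((n : ℚ) * (n' : ℚ)))) ∧
      Function.Bijective β := by
  classical
  have right_add : ∀ x y z : PhiM M, pairFun M x (y + z) = pairFun M x y + pairFun M x z := by
    intro x y z
    rw [pairFun_symm hM hker, pairFun_add_left hM hker, pairFun_symm hM hker y x,
      pairFun_symm hM hker z x]
  set β : PhiM M →+ PhiM M →+ QZ := AddMonoidHom.mk'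
    (fun x => AddMonoidHom.mk' (pairFun M x) (right_add x))
    (fun a b => AddMonoidHom.ext fun z => pairFun_add_left hM hker a b z) with hβ
  refine ⟨β, ?_, ?_, ?_⟩
  · intro x y T T' hx hy n n' S S' hn hn' hS hS'
    have hb : β x y = pairFun M x y := rfl
    rw [hb, pairFun_spec hM hker hx hy hn hn' hS hS']
    rfl
  · rw [injective_iff_map_eq_zero]
    intro x hx
    apply beta_inj hM hv hker
    intro y
    have h1 := DFunLike.congr_fun hx y
    exact h1
  · intro χ
    obtain ⟨x₀, hx₀⟩ := beta_surj hM hv hker χ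
    exact ⟨x₀, AddMonoidHom.ext fun y => hx₀ y⟩
end

section
/- Let R be a complete discrete valuation ring with algebraically closed residue field and fraction field K, with normalized valuation v, and let F be a finite extension of K with valuation ring O_F (the valuation ring of the unique extension of v). Then for any nonzero f ∈ F: if f ∈ O_F, then [F:K]·v(f) = length_{O_F}(O_F/(f)); and if f ∉ O_F, then [F:K]·v(f) = −length_{O_F}(O_F/(f^{-1})), where v also denotes the unique extension of v to F (normalized so that v has value group ℤ on K). -/
/-- The length of a module, as the Krull dimension of its lattice of
submodules. -/
noncomputable def moduleLength (R M : Type*) [Ring R] [AddCommGroup M]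
    [Module R M] : WithBot ℕ∞ :=
  Order.krullDim (Submodule R M)

lemma aux_krullDim (S : Type*) [CommRing S] [IsDomain S] [IsDiscreteValuationRing S]
    {ϖ : S} (hϖ : Irreducible ϖ) (m : ℕ) :
    Order.krullDim (Submodule S (S ⧸ Ideal.span {ϖ ^ m})) = ((m : ℕ∞) : WithBot ℕ∞) := by
  have hϖ0 : ϖ ≠ 0 := hϖ.ne_zero
  have hϖu : ¬IsUnit ϖ := hϖ.not_isUnit
  have hspan_le : ∀ {s t : ℕ}, Ideal.span {ϖ ^ s} ≤ Ideal.span {ϖ ^ t} ↔ t ≤ s := by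
    intro s t
    rw [Ideal.span_singleton_le_span_singleton, pow_dvd_pow_iff hϖ0 hϖu]
  have hspan_lt : ∀ {s t : ℕ}, Ideal.span {ϖ ^ s} < Ideal.span {ϖ ^ t} ↔ t < s := by
    intro s t
    rw [lt_iff_le_not_ge, lt_iff_le_not_ge, hspan_le, hspan_le]
  let e := Submodule.comapMkQRelIso (Ideal.span {ϖ ^ m} : Ideal S)
  rw [Order.krullDim_eq_of_orderIso e]
  set T := {p' : Submodule S S // (Ideal.span {ϖ ^ m} : Ideal S) ≤ p'} with hT
  have hne : ∀ J : T, (J.1 : Ideal S) ≠ ⊥ := by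
    intro J hbot
    have : (ϖ ^ m : S) ∈ (J.1 : Ideal S) := J.2 (Ideal.subset_span rfl)
    rw [hbot] at this
    exact pow_ne_zero m hϖ0 (by simpa using this)
  have hspec : ∀ J : T, ∃ n : ℕ, (J.1 : Ideal S) = Ideal.span {ϖ ^ n} :=
    fun J => IsDiscreteValuationRing.ideal_eq_span_pow_irreducible (hne J) hϖ
  choose n hn using hspec
  have hnm : ∀ J : T, n J ≤ m := by
    intro J
    have : Ideal.span {ϖ ^ m} ≤ Ideal.span {ϖ ^ (n J)} := (hn J) ▸ J.2
    exact hspan_le.1 this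
  have hmono : StrictMono (fun J : T => (⟨m - n J, by omega⟩ : Fin (m+1))) := by
    intro J1 J2 h
    have h' : Ideal.span {ϖ ^ (n J1)} < Ideal.span {ϖ ^ (n J2)} := by
      rw [← hn J1, ← hn J2]; exact h
    have := hspan_lt.1 h'
    have := hnm J1
    simp only [Fin.mk_lt_mk]
    omega
  refine le_antisymm ?_ ?_
  · have : Nonempty T := ⟨⟨⊤, le_top⟩⟩
    rw [Order.krullDim_eq_iSup_length, WithBot.coe_le_coe]
    refine iSup_le fun q => ?_
    have hl : (q.map _ hmono).length < m + 1 := by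
      have := LTSeries.length_lt_card (q.map _ hmono)
      simpa using this
    simp only [RelSeries.map_length] at hl
    exact_mod_cast Nat.lt_succ_iff.1 hl
  · let q : LTSeries T := ⟨m, fun i => ⟨Ideal.span {ϖ ^ (m - (i:ℕ))}, hspan_le.2 (by omega)⟩,
      by
        intro i
        change (_ : T) < _
        rw [Subtype.mk_lt_mk]
        refine hspan_lt.2 ?_
        have : (i : ℕ) < m := i.2
        simp only [Fin.coe_castSucc, Fin.val_succ]
        omega⟩
    have := Order.LTSeries.length_le_krullDim q
    exact_mod_cast this
/-- `R` a complete DVR with algebraically closed residue field,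
fraction field `K` and normalized valuation `v` (value group `ℤ`); `F/K` a
finite extension, `O_F` the valuation ring of the unique extension `w` of `v`
to `F` (the integral closure of `R` in `F`, a DVR with fraction field `F`).
The extension `w` is encoded as a `ℚ`-valued function on `F`, multiplicative on
nonzero elements, with `w(π) = 1` for `π` a uniformizer of `R` (so `w` extends
the normalized valuation of `K`) and nonnegative exactly on `O_F`.  Then for
any nonzero `f ∈ F`: if `f ∈ O_F` then `[F:K]·w(f) = length_{O_F}(O_F/(f))`,
and if `f ∉ O_F` then `[F:K]·w(f) = −length_{O_F}(O_F/(f⁻¹))`. -/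
theorem stmt10 (R K F OF : Type*)
    [CommRing R] [IsDomain R] [IsDiscreteValuationRing R]
    [IsAdicComplete (IsLocalRing.maximalIdeal R) R]
    [IsAlgClosed (IsLocalRing.ResidueField R)]
    [Field K] [Algebra R K] [IsFractionRing R K]
    [Field F] [Algebra K F] [FiniteDimensional K F]
    [CommRing OF] [IsDomain OF] [IsDiscreteValuationRing OF]
    [Algebra OF F] [IsFractionRing OF F]
    [Algebra R OF] [Algebra R F] [IsScalarTower R OF F] [IsScalarTower R K F]
    [IsIntegralClosure OF R F]
    (w : F → ℚ)
    (hw_mul : ∀ x y : F, x ≠ 0 → y ≠ 0 → w (x * y) = w x + w y)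
    (π : R) (hπ : Irreducible π) (hw_unif : w (algebraMap R F π) = 1)
    (hw_ring : ∀ x : F, x ≠ 0 → (0 ≤ w x ↔ x ∈ Set.range (algebraMap OF F)))
    (f : F) (hf : f ≠ 0) :
    (∀ g : OF, algebraMap OF F g = f →
      ∃ m : ℕ, moduleLength OF (OF ⧸ Ideal.span {g}) = (m : ℕ∞) ∧
        (Module.finrank K F : ℚ) * w f = (m : ℚ)) ∧
    (f ∉ Set.range (algebraMap OF F) → ∀ g : OF, algebraMap OF F g = f⁻¹ →
      ∃ m : ℕ, moduleLength OF (OF ⧸ Ideal.span {g}) = (m : ℕ∞) ∧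
        (Module.finrank K F : ℚ) * w f = -(m : ℚ)) := by
  classical
  have hOFF : Function.Injective (algebraMap OF F) := IsFractionRing.injective OF F
  have hRK : Function.Injective (algebraMap R K) := IsFractionRing.injective R K
  have hKF : Function.Injective (algebraMap K F) := (algebraMap K F).injective
  have hRF : Function.Injective (algebraMap R F) := by
    rw [IsScalarTower.algebraMap_eq R K F]; exact hKF.comp hRK
  have hROF : Function.Injective (algebraMap R OF) := by
    intro a b h
    apply hRF
    rw [IsScalarTower.algebraMap_eq R OF F, RingHom.comp_apply, RingHom.comp_apply, h]
  -- basic properties of w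
  have hw1 : w 1 = 0 := by
    have := hw_mul 1 1 one_ne_zero one_ne_zero
    simp only [mul_one] at this
    linarith
  have hwinv : ∀ x : F, x ≠ 0 → w x⁻¹ = - w x := by
    intro x hx
    have := hw_mul x x⁻¹ hx (inv_ne_zero hx)
    rw [mul_inv_cancel₀ hx, hw1] at this
    linarith
  have hwpow : ∀ (x : F), x ≠ 0 → ∀ n : ℕ, w (x ^ n) = n * w x := by
    intro x hx n
    induction n with
    | zero => simpa using hw1
    | succ n ih =>
      rw [pow_succ, hw_mul _ _ (pow_ne_zero n hx) hx, ih]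
      push_cast; ring
  have hne0 : ∀ z : OF, z ≠ 0 → algebraMap OF F z ≠ 0 := by
    intro z hz h
    exact hz (hOFF (by simpa using h))
  have hwu : ∀ u : OFˣ, w (algebraMap OF F (u : OF)) = 0 := by
    intro u
    have h1 : (algebraMap OF F (u : OF)) ≠ 0 := hne0 _ u.ne_zero
    have h2 : (algebraMap OF F ((u⁻¹ : OFˣ) : OF)) ≠ 0 := hne0 _ (u⁻¹).ne_zero
    have h3 := hw_mul _ _ h1 h2
    rw [← map_mul] at h3
    have h4 : ((u : OF) * ((u⁻¹ : OFˣ) : OF)) = 1 := u.mul_inv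
    rw [h4, map_one, hw1] at h3
    have ha := (hw_ring _ h1).2 ⟨u, rfl⟩
    have hb := (hw_ring _ h2).2 ⟨(u⁻¹ : OFˣ), rfl⟩
    linarith
  -- uniformizer of OF
  obtain ⟨ϖ, hϖ⟩ := IsDiscreteValuationRing.exists_irreducible OF
  have hϖ0 : ϖ ≠ 0 := hϖ.ne_zero
  have hϖu : ¬IsUnit ϖ := hϖ.not_isUnit
  have hπ0 : π ≠ 0 := hπ.ne_zero
  have hp0 : algebraMap R OF π ≠ 0 := fun h => hπ0 (hROF (by simpa using h))
  have hpF : algebraMap OF F (algebraMap R OF π) = algebraMap R F π := by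
    rw [← IsScalarTower.algebraMap_apply R OF F]
  have hπF0 : algebraMap R F π ≠ 0 := fun h => hπ0 (hRF (by simpa using h))
  have hpnu : ¬IsUnit (algebraMap R OF π) := by
    rintro ⟨u, hu⟩
    have := hwu u
    rw [hu, hpF, hw_unif] at this
    norm_num at this
  obtain ⟨e, u, hpe⟩ := IsDiscreteValuationRing.eq_unit_mul_pow_irreducible hp0 hϖ
  have he1 : 1 ≤ e := by
    rcases Nat.eq_zero_or_pos e with h | h
    · exact absurd (by rw [hpe, h, pow_zero, mul_one]; exact u.isUnit) hpnu
    · exact h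
  have hϖF0 : algebraMap OF F ϖ ≠ 0 := hne0 _ hϖ0
  have he0Q : (e : ℚ) ≠ 0 := by positivity
  have hwϖ : w (algebraMap OF F ϖ) = 1 / e := by
    have h1 : algebraMap R F π = algebraMap OF F (u : OF) * (algebraMap OF F ϖ) ^ e := by
      rw [← hpF, hpe, map_mul, map_pow]
    have h2 := hw_mul (algebraMap OF F (u : OF)) ((algebraMap OF F ϖ) ^ e)
      (hne0 _ u.ne_zero) (pow_ne_zero _ hϖF0)
    rw [← h1, hw_unif, hwu, hwpow _ hϖF0 e] at h2
    field_simp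
    linarith
  -- cancellation
  have hcancel : ∀ (i0 : ℕ) (c : OF), ϖ ^ (i0 + 1) ∣ c * ϖ ^ i0 → ϖ ∣ c := by
    rintro i0 c ⟨t, ht⟩
    refine ⟨t, ?_⟩
    apply mul_right_cancel₀ (pow_ne_zero i0 hϖ0)
    rw [ht, pow_succ]
    ring
  have hMtoSpan : ∀ b : R, b ∈ IsLocalRing.maximalIdeal R → ϖ ^ e ∣ algebraMap R OF b := by
    intro b hb
    rw [hπ.maximalIdeal_eq, Ideal.mem_span_singleton] at hb
    obtain ⟨c, rfl⟩ := hb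
    refine ⟨(u : OF) * algebraMap R OF c, ?_⟩
    rw [map_mul, hpe]
    ring
  have hL0 : ∀ b : Fin e → R,
      ϖ ^ e ∣ (∑ i : Fin e, algebraMap R OF (b i) * ϖ ^ (i : ℕ)) →
      ∀ i, b i ∈ IsLocalRing.maximalIdeal R := by
    intro b hmem
    by_contra hcon
    push_neg at hcon
    obtain ⟨i, hi⟩ := hcon
    set s : Finset (Fin e) := Finset.univ.filter
      (fun j => b j ∉ IsLocalRing.maximalIdeal R) with hs_def
    have hs : s.Nonempty := ⟨i, Finset.mem_filter.2 ⟨Finset.mem_univ _, hi⟩⟩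
    set i0 := s.min' hs with hi0_def
    have hi0 : b i0 ∉ IsLocalRing.maximalIdeal R :=
      (Finset.mem_filter.1 (s.min'_mem hs)).2
    have hi0min : ∀ j : Fin e, b j ∉ IsLocalRing.maximalIdeal R → i0 ≤ j :=
      fun j hj => s.min'_le j (Finset.mem_filter.2 ⟨Finset.mem_univ _, hj⟩)
    have hunit : IsUnit (b i0) := by
      by_contra hnu
      exact hi0 ((IsLocalRing.mem_maximalIdeal _).2 (mem_nonunits_iff.2 hnu))
    have hdvd_sum : ϖ ^ ((i0 : ℕ) + 1) ∣ ∑ j : Fin e, algebraMap R OF (b j) * ϖ ^ (j : ℕ) :=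
      dvd_trans (pow_dvd_pow ϖ (by have := i0.2; omega)) hmem
    have hdvd_other : ∀ j ∈ Finset.univ.erase i0,
        ϖ ^ ((i0 : ℕ) + 1) ∣ algebraMap R OF (b j) * ϖ ^ (j : ℕ) := by
      intro j hj
      rcases em (b j ∈ IsLocalRing.maximalIdeal R) with h | h
      · exact dvd_mul_of_dvd_left
          (dvd_trans (pow_dvd_pow ϖ (by have := i0.2; omega)) (hMtoSpan _ h)) _
      · have hne : j ≠ i0 := Finset.ne_of_mem_erase hj
        have hij : i0 < j := lt_of_le_of_ne (hi0min j h) (Ne.symm hne)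
        exact Dvd.dvd.mul_left (pow_dvd_pow ϖ (by exact_mod_cast hij)) _
    have hdvd_i0 : ϖ ^ ((i0 : ℕ) + 1) ∣ algebraMap R OF (b i0) * ϖ ^ (i0 : ℕ) := by
      have h1 : ∑ j : Fin e, algebraMap R OF (b j) * ϖ ^ (j : ℕ)
          = algebraMap R OF (b i0) * ϖ ^ (i0 : ℕ)
            + ∑ j ∈ Finset.univ.erase i0, algebraMap R OF (b j) * ϖ ^ (j : ℕ) :=
        (Finset.add_sum_erase Finset.univ _ (Finset.mem_univ i0)).symm
      have h2 : ϖ ^ ((i0 : ℕ) + 1) ∣ ∑ j ∈ Finset.univ.erase i0,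
          algebraMap R OF (b j) * ϖ ^ (j : ℕ) := Finset.dvd_sum hdvd_other
      have h3 : algebraMap R OF (b i0) * ϖ ^ (i0 : ℕ)
          = (∑ j : Fin e, algebraMap R OF (b j) * ϖ ^ (j : ℕ))
            - ∑ j ∈ Finset.univ.erase i0, algebraMap R OF (b j) * ϖ ^ (j : ℕ) := by
        rw [h1]; ring
      rw [h3]
      exact dvd_sub hdvd_sum h2
    have hdvd : ϖ ∣ algebraMap R OF (b i0) := hcancel _ _ hdvd_i0
    exact hϖu (isUnit_of_dvd_unit hdvd (hunit.map (algebraMap R OF)))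
  have hL : ∀ (N : ℕ) (b : Fin e → R),
      algebraMap R OF (π ^ N) ∣ (∑ i : Fin e, algebraMap R OF (b i) * ϖ ^ (i : ℕ)) →
      ∀ i, π ^ N ∣ b i := by
    intro N
    induction N with
    | zero => intro b _ i; simpa using one_dvd _
    | succ N ih =>
      intro b hmem i
      obtain ⟨y, hy⟩ := hmem
      have hbm : ∀ j, b j ∈ IsLocalRing.maximalIdeal R := by
        apply hL0
        rw [hy]
        refine dvd_mul_of_dvd_left ?_ _
        rw [map_pow, hpe, mul_pow, ← pow_mul]
        exact Dvd.dvd.mul_left (pow_dvd_pow ϖ (by nlinarith)) _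
      have hdvd : ∀ j, π ∣ b j := by
        intro j
        have := hbm j
        rwa [hπ.maximalIdeal_eq, Ideal.mem_span_singleton] at this
      choose c hc using hdvd
      have heq : algebraMap R OF π * (∑ j : Fin e, algebraMap R OF (c j) * ϖ ^ (j : ℕ))
          = algebraMap R OF π * (algebraMap R OF (π ^ N) * y) := by
        rw [Finset.mul_sum]
        calc ∑ j : Fin e, algebraMap R OF π * (algebraMap R OF (c j) * ϖ ^ (j : ℕ))
            = ∑ j : Fin e, algebraMap R OF (b j) * ϖ ^ (j : ℕ) := by
              refine Finset.sum_congr rfl fun j _ => ?_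
              rw [hc j, map_mul]; ring
          _ = algebraMap R OF (π ^ (N + 1)) * y := hy
          _ = algebraMap R OF π * (algebraMap R OF (π ^ N) * y) := by
              rw [pow_succ, map_mul]; ring
      have heq2 : (∑ j : Fin e, algebraMap R OF (c j) * ϖ ^ (j : ℕ))
          = algebraMap R OF (π ^ N) * y := mul_left_cancel₀ hp0 heq
      have := ih c ⟨y, heq2⟩ i
      rw [hc i, pow_succ, mul_comm π (c i)]
      exact mul_dvd_mul this dvd_rfl
  -- separatedness
  have hsep : ∀ z : OF, (∀ N : ℕ, algebraMap R OF (π ^ N) ∣ z) → z = 0 := by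
    intro z hz
    by_contra h0
    obtain ⟨M, v, hv⟩ := IsDiscreteValuationRing.eq_unit_mul_pow_irreducible h0 hϖ
    have h1 : ϖ ^ (M + 1) ∣ z := by
      refine dvd_trans ?_ (hz (M + 1))
      rw [map_pow, hpe, mul_pow, ← pow_mul]
      exact Dvd.dvd.mul_left (pow_dvd_pow ϖ (by nlinarith)) _
    rw [hv] at h1
    have h2 : ϖ ∣ (v : OF) := hcancel M _ h1
    exact hϖu (isUnit_of_dvd_unit h2 v.isUnit)
  have hsepR : ∀ a : R, (∀ N : ℕ, π ^ N ∣ a) → a = 0 := by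
    intro a ha
    by_contra h0
    obtain ⟨M, v, hv⟩ := IsDiscreteValuationRing.eq_unit_mul_pow_irreducible h0 hπ
    obtain ⟨t, ht⟩ := ha (M + 1)
    have h1 : (v : R) = π * (t : R) := by
      apply mul_right_cancel₀ (pow_ne_zero M hπ0)
      rw [← hv, ht, pow_succ]
      ring
    exact hπ.not_isUnit (isUnit_of_dvd_unit ⟨t, h1⟩ v.isUnit)
  -- residue field surjectivity
  have hpm : algebraMap R OF π ∈ IsLocalRing.maximalIdeal OF :=
    (IsLocalRing.mem_maximalIdeal _).2 (mem_nonunits_iff.2 hpnu)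
  have hresid : ∀ x : OF, ∃ a : R, x - algebraMap R OF a ∈ IsLocalRing.maximalIdeal OF := by
    set ρ : OF →+* IsLocalRing.ResidueField OF := IsLocalRing.residue OF with hρ
    have hker : ∀ a ∈ IsLocalRing.maximalIdeal R, (ρ.comp (algebraMap R OF)) a = 0 := by
      intro a ha
      rw [hπ.maximalIdeal_eq, Ideal.mem_span_singleton] at ha
      obtain ⟨c, rfl⟩ := ha
      have hπ0' : ρ (algebraMap R OF π) = 0 := Ideal.Quotient.eq_zero_iff_mem.2 hpm
      rw [RingHom.comp_apply, map_mul, map_mul, hπ0', zero_mul]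
    set φ : IsLocalRing.ResidueField R →+* IsLocalRing.ResidueField OF :=
      Ideal.Quotient.lift _ (ρ.comp (algebraMap R OF)) hker with hφ
    have hcomp : φ.comp (Ideal.Quotient.mk (IsLocalRing.maximalIdeal R))
        = ρ.comp (algebraMap R OF) := by
      ext a
      show (Ideal.Quotient.lift (IsLocalRing.maximalIdeal R) (ρ.comp (algebraMap R OF)) hker)
        ((Ideal.Quotient.mk (IsLocalRing.maximalIdeal R)) a) = _
      rw [Ideal.Quotient.lift_mk]
    have hφint : φ.IsIntegral := by
      intro z
      obtain ⟨x, rfl⟩ := Ideal.Quotient.mk_surjective z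
      have hx : IsIntegral R x := IsIntegralClosure.isIntegral R F x
      obtain ⟨P, hPm, hP⟩ := hx
      refine ⟨P.map (Ideal.Quotient.mk (IsLocalRing.maximalIdeal R)), hPm.map _, ?_⟩
      change Polynomial.eval₂ φ (ρ x) _ = 0
      have h6 := congrArg ρ hP
      rw [Polynomial.hom_eval₂, map_zero, ← hcomp] at h6
      exact (Polynomial.eval₂_map _ _ _).trans h6
    have hφsurj : Function.Surjective φ :=
      (IsAlgClosed.ringHom_bijective_of_isIntegral φ hφint).2
    intro x
    obtain ⟨a, ha⟩ := hφsurj (ρ x)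
    obtain ⟨a', rfl⟩ := Ideal.Quotient.mk_surjective a
    refine ⟨a', ?_⟩
    have h7 : φ (Ideal.Quotient.mk _ a') = ρ (algebraMap R OF a') :=
      RingHom.congr_fun hcomp a'
    rw [← Ideal.Quotient.eq_zero_iff_mem]
    show ρ _ = 0
    rw [map_sub, ← h7, ha, sub_self]
  -- digit expansion
  have hdig : ∀ (n : ℕ) (x : OF), ∃ (c : ℕ → R) (y : OF),
      x = (∑ i ∈ Finset.range n, algebraMap R OF (c i) * ϖ ^ i) + ϖ ^ n * y := by
    intro n
    induction n with
    | zero => intro x; exact ⟨0, x, by simp⟩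
    | succ n ih =>
      intro x
      obtain ⟨c, y, hy⟩ := ih x
      obtain ⟨a, ha⟩ := hresid y
      rw [hϖ.maximalIdeal_eq, Ideal.mem_span_singleton] at ha
      obtain ⟨y', hy'⟩ := ha
      refine ⟨Function.update c n a, y', ?_⟩
      have hyy : y = algebraMap R OF a + ϖ * y' := by rw [← hy']; ring
      rw [Finset.sum_range_succ, Function.update_self,
        Finset.sum_congr rfl (fun i hi => by
          rw [Function.update_of_ne (Finset.mem_range.1 hi).ne]),
        hy, hyy, pow_succ]
      ring
  have hstep : ∀ x : OF, ∃ (b : Fin e → R) (y : OF),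
      x = (∑ i : Fin e, algebraMap R OF (b i) * ϖ ^ (i : ℕ)) + algebraMap R OF π * y := by
    intro x
    obtain ⟨c, y, hy⟩ := hdig e x
    refine ⟨fun i => c i, ((u⁻¹ : OFˣ) : OF) * y, ?_⟩
    rw [hy, Finset.sum_range fun i => algebraMap R OF (c i) * ϖ ^ i]
    congr 1
    rw [hpe]
    calc ϖ ^ e * y = (↑u * ↑u⁻¹) * (ϖ ^ e * y) := by rw [u.mul_inv]; ring
      _ = ↑u * ϖ ^ e * (↑u⁻¹ * y) := by ring
  have hiter : ∀ (N : ℕ) (x : OF), ∃ (b : Fin e → R) (y : OF),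
      x = (∑ i : Fin e, algebraMap R OF (b i) * ϖ ^ (i : ℕ)) + algebraMap R OF (π ^ N) * y := by
    intro N
    induction N with
    | zero => intro x; exact ⟨0, x, by simp⟩
    | succ N ih =>
      intro x
      obtain ⟨b, y, hb⟩ := ih x
      obtain ⟨b', y', hb'⟩ := hstep y
      refine ⟨fun i => b i + π ^ N * b' i, y', ?_⟩
      have hsum : ∑ i : Fin e, algebraMap R OF (b i + π ^ N * b' i) * ϖ ^ (i : ℕ)
          = (∑ i : Fin e, algebraMap R OF (b i) * ϖ ^ (i : ℕ))
            + algebraMap R OF (π ^ N) * ∑ i : Fin e, algebraMap R OF (b' i) * ϖ ^ (i : ℕ) := by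
        rw [Finset.mul_sum, ← Finset.sum_add_distrib]
        refine Finset.sum_congr rfl fun i _ => ?_
        rw [map_add, map_mul]
        ring
      rw [hb, hb', hsum, pow_succ, map_mul]
      ring
  -- the maximal ideal powers as spans
  have hsmul : ∀ M : ℕ,
      ((IsLocalRing.maximalIdeal R) ^ M • ⊤ : Submodule R R) = Ideal.span {π ^ M} := by
    intro M
    rw [smul_eq_mul, Ideal.mul_top, hπ.maximalIdeal_eq, Ideal.span_singleton_pow]
  choose bb yy hbyy using hiter
  -- spanning of OF over R
  have hspanR : ∀ x : OF, ∃ g : Fin e → R,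
      x = ∑ i : Fin e, algebraMap R OF (g i) * ϖ ^ (i : ℕ) := by
    intro x
    have hcau : ∀ i : Fin e, ∀ {M N : ℕ}, M ≤ N →
        bb M x i ≡ bb N x i
          [SMOD ((IsLocalRing.maximalIdeal R) ^ M • ⊤ : Submodule R R)] := by
      intro i M N hMN
      rw [SModEq.sub_mem, hsmul M]
      rw [Ideal.mem_span_singleton]
      refine hL M (fun j => bb M x j - bb N x j) ?_ i
      have h1 := hbyy M x
      have h2 := hbyy N x
      refine ⟨algebraMap R OF (π ^ (N - M)) * yy N x - yy M x, ?_⟩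
      have hNM : π ^ N = π ^ M * π ^ (N - M) := by
        rw [← pow_add]
        congr 1
        omega
      have h3 : ∑ j : Fin e, algebraMap R OF (bb M x j - bb N x j) * ϖ ^ (j : ℕ)
          = (∑ j : Fin e, algebraMap R OF (bb M x j) * ϖ ^ (j : ℕ))
            - ∑ j : Fin e, algebraMap R OF (bb N x j) * ϖ ^ (j : ℕ) := by
        rw [← Finset.sum_sub_distrib]
        refine Finset.sum_congr rfl fun j _ => ?_
        rw [map_sub]
        ring
      rw [h3]
      have h4 : (∑ j : Fin e, algebraMap R OF (bb M x j) * ϖ ^ (j : ℕ))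
          = x - algebraMap R OF (π ^ M) * yy M x := eq_sub_of_add_eq h1.symm
      have h5 : (∑ j : Fin e, algebraMap R OF (bb N x j) * ϖ ^ (j : ℕ))
          = x - algebraMap R OF (π ^ N) * yy N x := eq_sub_of_add_eq h2.symm
      rw [h4, h5, hNM, map_mul]
      ring
    choose g hg using fun i : Fin e =>
      IsPrecomplete.prec (inferInstance : IsPrecomplete (IsLocalRing.maximalIdeal R) R)
        (f := fun N => bb N x i) (fun {M N} h => hcau i h)
    refine ⟨g, ?_⟩
    have hzero : x - ∑ i : Fin e, algebraMap R OF (g i) * ϖ ^ (i : ℕ) = 0 := by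
      apply hsep
      intro N
      have h1 := hbyy N x
      have h2 : ∀ i, π ^ N ∣ bb N x i - g i := by
        intro i
        have := hg i N
        rw [SModEq.sub_mem, hsmul N, Ideal.mem_span_singleton] at this
        exact this
      choose t ht using h2
      refine ⟨(∑ i : Fin e, algebraMap R OF (t i) * ϖ ^ (i : ℕ)) + yy N x, ?_⟩
      have hAB : (∑ i : Fin e, algebraMap R OF (bb N x i) * ϖ ^ (i : ℕ))
          - ∑ i : Fin e, algebraMap R OF (g i) * ϖ ^ (i : ℕ)
          = algebraMap R OF (π ^ N) * ∑ i : Fin e, algebraMap R OF (t i) * ϖ ^ (i : ℕ) := by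
        rw [← Finset.sum_sub_distrib, Finset.mul_sum]
        refine Finset.sum_congr rfl fun i _ => ?_
        rw [← sub_mul, ← map_sub, ht i, map_mul]
        ring
      linear_combination h1 + hAB
    exact (sub_eq_zero.mp hzero)
  -- linear independence over K
  have hli : LinearIndependent K (fun i : Fin e => algebraMap OF F (ϖ ^ (i : ℕ))) := by
    rw [Fintype.linearIndependent_iff]
    intro gk hgk i
    obtain ⟨d, hd⟩ := IsLocalization.exist_integer_multiples_of_finite (nonZeroDivisors R) gk
    choose a ha using fun j => RingHom.mem_range.1 (hd j)
    have h1 : ∑ j : Fin e, algebraMap R OF (a j) * ϖ ^ (j : ℕ) = 0 := by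
      apply hOFF
      rw [map_sum, map_zero]
      have hterm : ∀ j : Fin e, algebraMap OF F (algebraMap R OF (a j) * ϖ ^ (j : ℕ))
          = algebraMap K F (algebraMap R K (d : R))
            * (gk j • algebraMap OF F (ϖ ^ (j : ℕ))) := by
        intro j
        rw [map_mul, ← IsScalarTower.algebraMap_apply R OF F,
          IsScalarTower.algebraMap_apply R K F, ha j, Algebra.smul_def, map_mul,
          Algebra.smul_def]
        ring
      rw [Finset.sum_congr rfl fun j _ => hterm j, ← Finset.mul_sum, hgk, mul_zero]
    have h2 : ∀ j, a j = 0 := fun j =>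
      hsepR _ (fun N => hL N a (by rw [h1]; exact dvd_zero _) j)
    have hd0 : algebraMap R K (d : R) ≠ 0 := by
      have hdz : (d : R) ≠ 0 := nonZeroDivisors.ne_zero d.2
      exact fun h => hdz (hRK (by simpa using h))
    have h3 := ha i
    rw [h2 i, map_zero, Algebra.smul_def] at h3
    rcases mul_eq_zero.1 h3.symm with h | h
    · exact absurd h hd0
    · exact h
  -- spanning of F over K
  have hspanF : ∀ x : F,
      x ∈ Submodule.span K (Set.range (fun i : Fin e => algebraMap OF F (ϖ ^ (i : ℕ)))) := by
    intro x
    rcases eq_or_ne x 0 with rfl | hx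
    · exact zero_mem _
    obtain ⟨num, den, hden, hx_eq⟩ := IsFractionRing.div_surjective (A := OF) x
    have hden0 : den ≠ 0 := nonZeroDivisors.ne_zero hden
    obtain ⟨M, vden, hvden⟩ := IsDiscreteValuationRing.eq_unit_mul_pow_irreducible hden0 hϖ
    have hM : M ≤ e * M := Nat.le_mul_of_pos_left M (by omega)
    have hc : ∃ c : OF, algebraMap R OF (π ^ M) = c * den := by
      refine ⟨(↑u) ^ M * ϖ ^ (e * M - M) * ↑vden⁻¹, ?_⟩
      rw [hvden, map_pow, hpe, mul_pow, ← pow_mul]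
      calc (↑u) ^ M * ϖ ^ (e * M)
          = (↑u) ^ M * (ϖ ^ (e * M - M) * ϖ ^ M) := by
            rw [← pow_add, Nat.sub_add_cancel hM]
        _ = ((↑u) ^ M * ϖ ^ (e * M - M)) * (((↑vden⁻¹ : OFˣ) : OF) * ↑vden * ϖ ^ M) := by
            rw [vden.inv_mul]; ring
        _ = (↑u) ^ M * ϖ ^ (e * M - M) * ↑vden⁻¹ * (↑vden * ϖ ^ M) := by ring
    obtain ⟨c, hc⟩ := hc
    have hdenF0 : algebraMap OF F den ≠ 0 := hne0 _ hden0
    have hπM0 : algebraMap R F (π ^ M) ≠ 0 :=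
      fun h => (pow_ne_zero M hπ0) (hRF (by simpa using h))
    have hπMK0 : algebraMap R K (π ^ M) ≠ 0 :=
      fun h => (pow_ne_zero M hπ0) (hRK (by simpa using h))
    have key : x * algebraMap R F (π ^ M) = algebraMap OF F (c * num) := by
      rw [IsScalarTower.algebraMap_apply R OF F, hc, map_mul, map_mul, ← hx_eq]
      field_simp
    have hx2 : x = (algebraMap R K (π ^ M))⁻¹ • algebraMap OF F (c * num) := by
      rw [Algebra.smul_def, map_inv₀, ← IsScalarTower.algebraMap_apply R K F, ← key]
      field_simp
    rw [hx2]
    refine Submodule.smul_mem _ _ ?_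
    obtain ⟨gg, hgg⟩ := hspanR (c * num)
    rw [hgg, map_sum]
    refine Submodule.sum_mem _ fun j _ => ?_
    have hterm : algebraMap OF F (algebraMap R OF (gg j) * ϖ ^ (j : ℕ))
        = (algebraMap R K (gg j)) • algebraMap OF F (ϖ ^ (j : ℕ)) := by
      rw [map_mul, ← IsScalarTower.algebraMap_apply R OF F,
        IsScalarTower.algebraMap_apply R K F, Algebra.smul_def]
    rw [hterm]
    exact Submodule.smul_mem _ _ (Submodule.subset_span ⟨j, rfl⟩)
  have hfr : Module.finrank K F = e := by
    let B : Module.Basis (Fin e) K F := Module.Basis.mk hli (fun x _ => hspanF x)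
    rw [Module.finrank_eq_card_basis B, Fintype.card_fin]
  -- the main computation for elements of OF
  have main : ∀ g : OF, g ≠ 0 →
      ∃ m : ℕ, moduleLength OF (OF ⧸ Ideal.span {g}) = (m : ℕ∞) ∧
        w (algebraMap OF F g) = (m : ℚ) / e := by
    intro g hg
    obtain ⟨m, ug, hgm⟩ := IsDiscreteValuationRing.eq_unit_mul_pow_irreducible hg hϖ
    refine ⟨m, ?_, ?_⟩
    · have hspan : Ideal.span {g} = Ideal.span {ϖ ^ m} := by
        rw [Ideal.span_singleton_eq_span_singleton]
        exact ⟨ug⁻¹, by rw [hgm, mul_comm (↑ug : OF) (ϖ ^ m), mul_assoc, ug.mul_inv, mul_one]⟩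
      rw [show moduleLength OF (OF ⧸ Ideal.span {g})
          = Order.krullDim (Submodule OF (OF ⧸ Ideal.span {g})) from rfl, hspan]
      exact aux_krullDim OF hϖ m
    · rw [hgm, map_mul, map_pow,
        hw_mul _ _ (hne0 _ ug.ne_zero) (pow_ne_zero _ hϖF0), hwu,
        hwpow _ hϖF0, hwϖ]
      ring
  constructor
  · intro g hg
    have hg0 : g ≠ 0 := fun h => hf (by rw [← hg, h, map_zero])
    obtain ⟨m, hlen, hwg⟩ := main g hg0
    refine ⟨m, hlen, ?_⟩
    rw [hfr, ← hg, hwg]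
    field_simp
  · intro _ g hg
    have hg0 : g ≠ 0 := fun h => (inv_ne_zero hf) (by rw [← hg, h, map_zero])
    obtain ⟨m, hlen, hwg⟩ := main g hg0
    refine ⟨m, hlen, ?_⟩
    have h1 : w f⁻¹ = (m : ℚ) / e := by rw [← hg]; exact hwg
    have h2 := hwinv f hf
    rw [h1] at h2
    rw [hfr, show w f = -((m:ℚ)/e) from by linarith]
    field_simp
end
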